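/- Fix k ∈ ℝ^d and constants ρ, c > 0, and for a real p×d matrix Λ of full rank d define the Gaussian-like spectral density φ_Λ(k) = ρ (2π)^{d/2} c^{−1} exp(−2π² c^{−2/d} det(ΛᵀΛ)^{1/d} kᵀ(ΛᵀΛ)^{−1}k). Then the map Λ ↦ φ_Λ(k) is Fréchet differentiable at every full-rank Λ with gradient −2π² c^{−2/d} φ_Λ(k) · g^{(k)}(Λ), where g^{(k)}(Λ) = 2 det(ΛᵀΛ)^{1/d} Λ (ΛᵀΛ)^{−1} [ (1/d)(kᵀ(ΛᵀΛ)^{−1}k) I_d − k kᵀ (ΛᵀΛ)^{−1} ]. -/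

import Mathlib

open Matrix Real

attribute [local instance] Matrix.normedAddCommGroup Matrix.normedSpace

/-- The continuous linear map `H ↦ tr(Gᵀ H)`, representing the gradient `G`. -/
noncomputable def gradCLM {p d : ℕ} (G : Matrix (Fin p) (Fin d) ℝ) :
    Matrix (Fin p) (Fin d) ℝ →L[ℝ] ℝ :=
  LinearMap.toContinuousLinearMap
    { toFun := fun H => (Gᵀ * H).trace
      map_add' := fun H₁ H₂ => by simp [Matrix.mul_add]
      map_smul' := fun c H => by simp [Matrix.mul_smul] }

/-- The gradient matrix `g^{(k)}(Λ)`. -/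
noncomputable def gMat {p d : ℕ} (k : Fin d → ℝ) (Λ : Matrix (Fin p) (Fin d) ℝ) :
    Matrix (Fin p) (Fin d) ℝ :=
  (2 * (Λᵀ * Λ).det ^ ((1 : ℝ) / d)) •
    (Λ * (Λᵀ * Λ)⁻¹ *
      (((k ⬝ᵥ ((Λᵀ * Λ)⁻¹ *ᵥ k)) / d) • (1 : Matrix (Fin d) (Fin d) ℝ) -
        Matrix.vecMulVec k k * (Λᵀ * Λ)⁻¹))

/-- The Gaussian-like spectral density `φ_Λ(k)`. -/
noncomputable def phiGauss {p d : ℕ} (ρ c : ℝ) (k : Fin d → ℝ)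
    (Λ : Matrix (Fin p) (Fin d) ℝ) : ℝ :=
  ρ * (2 * π) ^ ((d : ℝ) / 2) / c *
    Real.exp (-(2 * π ^ 2 * c ^ (-(2 : ℝ) / d) * (Λᵀ * Λ).det ^ ((1 : ℝ) / d) *
      (k ⬝ᵥ ((Λᵀ * Λ)⁻¹ *ᵥ k))))

namespace Stmt13Aux

lemma norm_mul_le' {a b e : ℕ} (X : Matrix (Fin a) (Fin b) ℝ) (Y : Matrix (Fin b) (Fin e) ℝ) :
    ‖X * Y‖ ≤ b * ‖X‖ * ‖Y‖ := by
  rw [Matrix.norm_le_iff (by positivity)]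
  intro i j
  calc ‖(X * Y) i j‖ = |∑ t, X i t * Y t j| := by simp [Matrix.mul_apply]
    _ ≤ ∑ t, |X i t * Y t j| := Finset.abs_sum_le_sum_abs _ _
    _ ≤ ∑ _t : Fin b, ‖X‖ * ‖Y‖ := by
        refine Finset.sum_le_sum fun t _ => ?_
        rw [abs_mul]
        exact mul_le_mul (le_trans (norm_le_pi_norm (X i) t) (norm_le_pi_norm X i))
          (le_trans (norm_le_pi_norm (Y t) j) (norm_le_pi_norm Y t)) (abs_nonneg _)
          (norm_nonneg _)
    _ = b * ‖X‖ * ‖Y‖ := by simp [mul_assoc]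

variable {p d : ℕ}

/-- derivative of `L ↦ Lᵀ * L` -/
noncomputable def gramD (Λ : Matrix (Fin p) (Fin d) ℝ) :
    Matrix (Fin p) (Fin d) ℝ →L[ℝ] Matrix (Fin d) (Fin d) ℝ :=
  LinearMap.toContinuousLinearMap
    { toFun := fun H => Hᵀ * Λ + Λᵀ * H
      map_add' := fun H₁ H₂ => by
        simp [Matrix.transpose_add, Matrix.add_mul, Matrix.mul_add]; abel
      map_smul' := fun c H => by
        simp [Matrix.transpose_smul, Matrix.smul_mul, Matrix.mul_smul, smul_add] }

@[simp] lemma gramD_apply (Λ H : Matrix (Fin p) (Fin d) ℝ) :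
    gramD Λ H = Hᵀ * Λ + Λᵀ * H := rfl

lemma hasFDerivAt_gram (Λ : Matrix (Fin p) (Fin d) ℝ) :
    HasFDerivAt (fun L : Matrix (Fin p) (Fin d) ℝ => Lᵀ * L) (gramD Λ) Λ := by
  refine hasFDerivAt_iff_isLittleO_nhds_zero.mpr ?_
  have h1 : ∀ H : Matrix (Fin p) (Fin d) ℝ,
      (Λ + H)ᵀ * (Λ + H) - Λᵀ * Λ - gramD Λ H = Hᵀ * H := by
    intro H
    simp only [gramD, LinearMap.coe_toContinuousLinearMap', LinearMap.coe_mk, AddHom.coe_mk,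
      Matrix.transpose_add, Matrix.add_mul, Matrix.mul_add]
    abel
  erw [funext h1]
  calc (fun H : Matrix (Fin p) (Fin d) ℝ => Hᵀ * H)
      =O[nhds 0] (fun H : Matrix (Fin p) (Fin d) ℝ => ‖H‖ * ‖H‖) := by
        refine Asymptotics.IsBigO.of_bound p ?_
        filter_upwards with H
        calc ‖Hᵀ * H‖ ≤ p * ‖Hᵀ‖ * ‖H‖ := norm_mul_le' _ _
          _ = p * ‖(‖H‖ * ‖H‖)‖ := by
              rw [Matrix.norm_transpose]
              simp [norm_mul, abs_of_nonneg (norm_nonneg H), mul_assoc]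
    _ =o[nhds 0] (fun H : Matrix (Fin p) (Fin d) ℝ => H) := by
        have h2 : (fun H : Matrix (Fin p) (Fin d) ℝ => ‖H‖) =o[nhds 0]
            (fun _ => (1 : ℝ)) := (Asymptotics.isLittleO_one_iff ℝ).mpr tendsto_norm_zero
        have h3 := h2.mul_isBigO
          (Asymptotics.isBigO_refl (fun H : Matrix (Fin p) (Fin d) ℝ => ‖H‖) (nhds 0))
        simp only [one_mul] at h3
        exact h3.trans_isBigO (Asymptotics.isBigO_norm_left.mpr (Asymptotics.isBigO_refl _ _))

/-- `det` as a continuous multilinear map in the rows. -/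
noncomputable def detCM (d : ℕ) :
    ContinuousMultilinearMap ℝ (fun _ : Fin d => (Fin d → ℝ)) ℝ :=
  MultilinearMap.mkContinuous
    (Matrix.detRowAlternating (R := ℝ) (n := Fin d)).toMultilinearMap
    (d.factorial) (by
      intro m
      have h0 : (Matrix.detRowAlternating (R := ℝ) (n := Fin d)).toMultilinearMap m
          = Matrix.det (Matrix.of m) := rfl
      rw [h0, Matrix.det_apply]
      calc ‖∑ σ : Equiv.Perm (Fin d), Equiv.Perm.sign σ • ∏ i, Matrix.of m (σ i) i‖
          ≤ ∑ σ : Equiv.Perm (Fin d), ‖Equiv.Perm.sign σ • ∏ i, Matrix.of m (σ i) i‖ :=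
            norm_sum_le _ _
        _ ≤ ∑ _σ : Equiv.Perm (Fin d), ∏ i, ‖m i‖ := by
            refine Finset.sum_le_sum fun σ _ => ?_
            have h1 : ‖Equiv.Perm.sign σ • ∏ i, Matrix.of m (σ i) i‖
                = ‖∏ i, m (σ i) i‖ := by
              rcases Int.units_eq_one_or (Equiv.Perm.sign σ) with h | h <;>
                simp [h, Matrix.of_apply]
            rw [h1]
            calc ‖∏ i, m (σ i) i‖ = ∏ i, ‖m (σ i) i‖ := by rw [norm_prod]
              _ ≤ ∏ i, ‖m (σ i)‖ := by
                  refine Finset.prod_le_prod (fun i _ => norm_nonneg _) fun i _ =>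
                    norm_le_pi_norm (m (σ i)) i
              _ = ∏ i, ‖m i‖ := Equiv.prod_comp σ (fun j => ‖m j‖)
        _ = d.factorial * ∏ i, ‖m i‖ := by
            rw [Finset.sum_const, Finset.card_univ, Fintype.card_perm]
            simp [nsmul_eq_mul])

/-- derivative of `det` -/
noncomputable def detD (A : Matrix (Fin d) (Fin d) ℝ) :
    Matrix (Fin d) (Fin d) ℝ →L[ℝ] ℝ :=
  LinearMap.toContinuousLinearMap
    { toFun := fun H => (A.adjugate * H).trace
      map_add' := fun H₁ H₂ => by simp [Matrix.mul_add]
      map_smul' := fun c H => by simp [Matrix.mul_smul] }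

@[simp] lemma detD_apply (A H : Matrix (Fin d) (Fin d) ℝ) :
    detD A H = (A.adjugate * H).trace := rfl

lemma hasFDerivAt_det (A : Matrix (Fin d) (Fin d) ℝ) :
    HasFDerivAt (fun M : Matrix (Fin d) (Fin d) ℝ => M.det) (detD A) A := by
  have h := (detCM d).hasFDerivAt A
  have hfun : (fun M : Matrix (Fin d) (Fin d) ℝ => M.det) = fun x => detCM d x := rfl
  rw [hfun]
  have heq : (detCM d).linearDeriv A = detD A := by
    ext H
    erw [ContinuousMultilinearMap.linearDeriv_apply]
    symm
    have hterm : ∀ i, detCM d (Function.update A i (H i))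
        = Matrix.cramer Aᵀ (H i) i := by
      intro i
      have h1 : detCM d (Function.update A i (H i)) = (A.updateRow i (H i)).det := rfl
      rw [h1, ← Matrix.cramer_transpose_apply]
    simp only [hterm, Matrix.cramer_eq_adjugate_mulVec, ← Matrix.adjugate_transpose]
    simp only [Matrix.trace, Matrix.diag, Matrix.mul_apply, Matrix.mulVec, dotProduct,
      Matrix.transpose_apply]
    show (∑ x : Fin d, ∑ j : Fin d, A.adjugate x j * H j x) = _
    rw [Finset.sum_comm]
  rw [← heq]
  exact h

/-- derivative of matrix inverse -/
noncomputable def invD (A : Matrix (Fin d) (Fin d) ℝ) :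
    Matrix (Fin d) (Fin d) ℝ →L[ℝ] Matrix (Fin d) (Fin d) ℝ :=
  LinearMap.toContinuousLinearMap
    { toFun := fun H => -(A⁻¹ * H * A⁻¹)
      map_add' := fun H₁ H₂ => by simp [Matrix.mul_add, Matrix.add_mul]; abel
      map_smul' := fun c H => by simp [Matrix.mul_smul, Matrix.smul_mul] }

@[simp] lemma invD_apply (A H : Matrix (Fin d) (Fin d) ℝ) :
    invD A H = -(A⁻¹ * H * A⁻¹) := rfl

lemma hasFDerivAt_inv (A : Matrix (Fin d) (Fin d) ℝ) (hA : A.det ≠ 0) :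
    HasFDerivAt (fun M : Matrix (Fin d) (Fin d) ℝ => M⁻¹) (invD A) A := by
  have hAu : IsUnit A.det := isUnit_iff_ne_zero.mpr hA
  have hcont : ContinuousAt (fun M : Matrix (Fin d) (Fin d) ℝ => M⁻¹) A := by
    refine continuousAt_matrix_inv A ?_
    rw [Ring.inverse_eq_inv']
    exact continuousAt_inv₀ hA
  have hdetc : Filter.Tendsto (fun H : Matrix (Fin d) (Fin d) ℝ => (A + H).det)
      (nhds 0) (nhds A.det) := by
    have h1 : Continuous (fun H : Matrix (Fin d) (Fin d) ℝ => (A + H).det) :=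
      (continuous_const.add continuous_id).matrix_det
    simpa using h1.tendsto 0
  have hev : ∀ᶠ H : Matrix (Fin d) (Fin d) ℝ in nhds 0, (A + H).det ≠ 0 :=
    hdetc.eventually (isOpen_ne.mem_nhds hA)
  have hbnd : ∀ᶠ H : Matrix (Fin d) (Fin d) ℝ in nhds 0, ‖(A + H)⁻¹‖ ≤ ‖A⁻¹‖ + 1 := by
    have h3 : Filter.Tendsto (fun H : Matrix (Fin d) (Fin d) ℝ => A + H) (nhds 0) (nhds A) := by
      have := (continuous_const.add continuous_id :
        Continuous fun H : Matrix (Fin d) (Fin d) ℝ => A + H).tendsto 0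
      exact this.trans (le_of_eq (by simp))
    have h2 : Filter.Tendsto (fun H : Matrix (Fin d) (Fin d) ℝ => (A + H)⁻¹)
        (nhds 0) (nhds A⁻¹) := hcont.tendsto.comp h3
    exact h2.norm.eventually_le_const (by linarith [norm_nonneg A⁻¹])
  refine hasFDerivAt_iff_isLittleO_nhds_zero.mpr ?_
  have hkey : ∀ᶠ H : Matrix (Fin d) (Fin d) ℝ in nhds 0,
      (A + H)⁻¹ - A⁻¹ - invD A H = (A + H)⁻¹ * H * A⁻¹ * H * A⁻¹ := by
    filter_upwards [hev] with H hH
    have hBu : IsUnit (A + H).det := isUnit_iff_ne_zero.mpr hH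
    have e1 : (A + H)⁻¹ - A⁻¹ = -((A + H)⁻¹ * H * A⁻¹) := by
      have k1 : (A + H)⁻¹ * A * A⁻¹ = (A + H)⁻¹ := by
        rw [Matrix.mul_assoc, Matrix.mul_nonsing_inv A hAu, Matrix.mul_one]
      have k2 : (A + H)⁻¹ * (A + H) * A⁻¹ = A⁻¹ := by
        rw [Matrix.nonsing_inv_mul _ hBu, Matrix.one_mul]
      have hsub : A - (A + H) = -H := by abel
      calc (A + H)⁻¹ - A⁻¹ = (A + H)⁻¹ * A * A⁻¹ - (A + H)⁻¹ * (A + H) * A⁻¹ := by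
            rw [k1, k2]
        _ = -((A + H)⁻¹ * H * A⁻¹) := by
            rw [← Matrix.sub_mul, ← Matrix.mul_sub, hsub, Matrix.mul_neg, Matrix.neg_mul]
    have e3 : A⁻¹ - (A + H)⁻¹ = (A + H)⁻¹ * H * A⁻¹ := by
      rw [← neg_sub, e1, neg_neg]
    have e2 : invD A H = -(A⁻¹ * H * A⁻¹) := rfl
    rw [e2, e1]
    calc -((A + H)⁻¹ * H * A⁻¹) - -(A⁻¹ * H * A⁻¹)
        = (A⁻¹ - (A + H)⁻¹) * H * A⁻¹ := by
          rw [Matrix.sub_mul, Matrix.sub_mul]; abel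
      _ = (A + H)⁻¹ * H * A⁻¹ * H * A⁻¹ := by rw [e3]
  have hO : (fun H : Matrix (Fin d) (Fin d) ℝ => (A + H)⁻¹ * H * A⁻¹ * H * A⁻¹)
      =O[nhds 0] (fun H => ‖H‖ * ‖H‖) := by
    refine Asymptotics.IsBigO.of_bound
      ((d * d * d * d) * ((‖A⁻¹‖ + 1) * (‖A⁻¹‖ * ‖A⁻¹‖))) ?_
    filter_upwards [hbnd] with H hb
    have b1 := norm_mul_le' ((A + H)⁻¹ * H * A⁻¹ * H) A⁻¹
    have n1 : (0:ℝ) ≤ ‖H‖ := norm_nonneg _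
    have hnn : ‖(‖H‖ * ‖H‖)‖ = ‖H‖ * ‖H‖ := by
      rw [Real.norm_eq_abs, abs_of_nonneg (mul_nonneg n1 n1)]
    rw [hnn]
    calc ‖(A + H)⁻¹ * H * A⁻¹ * H * A⁻¹‖
        ≤ d * ‖(A + H)⁻¹ * H * A⁻¹ * H‖ * ‖A⁻¹‖ := b1
      _ ≤ d * (d * ‖(A + H)⁻¹ * H * A⁻¹‖ * ‖H‖) * ‖A⁻¹‖ := by
          gcongr; exact norm_mul_le' _ _
      _ ≤ d * (d * (d * ‖(A + H)⁻¹ * H‖ * ‖A⁻¹‖) * ‖H‖) * ‖A⁻¹‖ := by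
          gcongr; exact norm_mul_le' _ _
      _ ≤ d * (d * (d * (d * ‖(A + H)⁻¹‖ * ‖H‖) * ‖A⁻¹‖) * ‖H‖) * ‖A⁻¹‖ := by
          gcongr; exact norm_mul_le' _ _
      _ ≤ d * (d * (d * (d * (‖A⁻¹‖ + 1) * ‖H‖) * ‖A⁻¹‖) * ‖H‖) * ‖A⁻¹‖ := by gcongr
      _ = (d * d * d * d) * ((‖A⁻¹‖ + 1) * (‖A⁻¹‖ * ‖A⁻¹‖)) * (‖H‖ * ‖H‖) := by ring
  have hsq : (fun H : Matrix (Fin d) (Fin d) ℝ => ‖H‖ * ‖H‖)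
      =o[nhds 0] (fun H : Matrix (Fin d) (Fin d) ℝ => H) := by
    have h2 : (fun H : Matrix (Fin d) (Fin d) ℝ => ‖H‖) =o[nhds 0]
        (fun _ => (1 : ℝ)) := (Asymptotics.isLittleO_one_iff ℝ).mpr tendsto_norm_zero
    have h3 := h2.mul_isBigO
      (Asymptotics.isBigO_refl (fun H : Matrix (Fin d) (Fin d) ℝ => ‖H‖) (nhds 0))
    simp only [one_mul] at h3
    exact h3.trans_isBigO (Asymptotics.isBigO_norm_left.mpr (Asymptotics.isBigO_refl _ _))
  have hkey' : (fun H : Matrix (Fin d) (Fin d) ℝ => (A + H)⁻¹ * H * A⁻¹ * H * A⁻¹)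
      =ᶠ[nhds 0] (fun H => (A + H)⁻¹ - A⁻¹ - invD A H) :=
    Filter.EventuallyEq.symm (hkey.mono fun H h => h)
  exact ((hO.trans_isLittleO hsq).congr' hkey' Filter.EventuallyEq.rfl)

/-- quadratic form CLM -/
noncomputable def quadCLM (k : Fin d → ℝ) :
    Matrix (Fin d) (Fin d) ℝ →L[ℝ] ℝ :=
  LinearMap.toContinuousLinearMap
    { toFun := fun M => k ⬝ᵥ (M *ᵥ k)
      map_add' := fun M N => by simp [Matrix.add_mulVec, dotProduct_add]
      map_smul' := fun r M => by simp [Matrix.smul_mulVec] }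

@[simp] lemma quadCLM_apply (k : Fin d → ℝ) (M : Matrix (Fin d) (Fin d) ℝ) :
    quadCLM k M = k ⬝ᵥ (M *ᵥ k) := rfl

@[simp] lemma gradCLM_apply (G H : Matrix (Fin p) (Fin d) ℝ) :
    gradCLM G H = (Gᵀ * H).trace := rfl

/-- symmetric quadratic form trick -/
lemma dot_transpose (k : Fin d → ℝ) (M : Matrix (Fin d) (Fin d) ℝ) :
    k ⬝ᵥ (Mᵀ *ᵥ k) = k ⬝ᵥ (M *ᵥ k) := by
  rw [Matrix.mulVec_transpose, Matrix.dotProduct_mulVec, dotProduct_comm]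

lemma trace_vecMulVec_mul (k : Fin d → ℝ) (M : Matrix (Fin d) (Fin d) ℝ) :
    (Matrix.vecMulVec k k * M).trace = k ⬝ᵥ (M *ᵥ k) := by
  simp only [Matrix.trace, Matrix.diag, Matrix.mul_apply, Matrix.vecMulVec_apply,
    Matrix.mulVec, dotProduct]
  rw [Finset.sum_comm]
  exact Finset.sum_congr rfl fun i _ => by
    rw [Finset.mul_sum]
    exact Finset.sum_congr rfl fun j _ => by ring

lemma key_identity (k : Fin d → ℝ) (Λ H : Matrix (Fin p) (Fin d) ℝ)
    (hpos : 0 < (Λᵀ * Λ).det) :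
    ((gMat k Λ)ᵀ * H).trace =
      (Λᵀ * Λ).det ^ ((1 : ℝ) / d) * (k ⬝ᵥ (-((Λᵀ * Λ)⁻¹ * (Hᵀ * Λ + Λᵀ * H) * (Λᵀ * Λ)⁻¹)) *ᵥ k)
      + (k ⬝ᵥ ((Λᵀ * Λ)⁻¹ *ᵥ k)) * ((1 : ℝ) / d * (Λᵀ * Λ).det ^ ((1 : ℝ) / d - 1) *
          ((Λᵀ * Λ).adjugate * (Hᵀ * Λ + Λᵀ * H)).trace) := by
  have hdet0 : (Λᵀ * Λ).det ≠ 0 := hpos.ne'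
  set A : Matrix (Fin d) (Fin d) ℝ := Λᵀ * Λ with hA
  set B : Matrix (Fin d) (Fin d) ℝ := A⁻¹ with hB
  have hsym : Aᵀ = A := by rw [hA, Matrix.transpose_mul, Matrix.transpose_transpose]
  have hsymB : Bᵀ = B := by rw [hB, Matrix.transpose_nonsing_inv, hsym]
  have hkkT : (Matrix.vecMulVec k k)ᵀ = Matrix.vecMulVec k k := by
    ext i j; simp [Matrix.vecMulVec_apply, Matrix.transpose_apply, mul_comm]
  have hadj : A.adjugate = A.det • B := by
    rw [hB, Matrix.inv_def, Ring.inverse_eq_inv', smul_smul, mul_inv_cancel₀ hdet0, one_smul]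
  have hτ : (B * (Hᵀ * Λ)).trace = (B * (Λᵀ * H)).trace := by
    have e : (B * (Hᵀ * Λ))ᵀ = Λᵀ * H * B := by
      rw [Matrix.transpose_mul, Matrix.transpose_mul, Matrix.transpose_transpose, hsymB]
    rw [← Matrix.trace_transpose (B * (Hᵀ * Λ)), e, Matrix.trace_mul_comm]
  have hW : k ⬝ᵥ ((B * (Hᵀ * (Λ * B))) *ᵥ k) = k ⬝ᵥ ((B * (Λᵀ * (H * B))) *ᵥ k) := by
    have e : (B * (Λᵀ * (H * B)))ᵀ = B * (Hᵀ * (Λ * B)) := by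
      simp only [Matrix.transpose_mul, Matrix.transpose_transpose, hsymB, Matrix.mul_assoc]
    rw [← e, dot_transpose]
  have hβ : (B * (Matrix.vecMulVec k k * (B * (Λᵀ * H)))).trace
      = k ⬝ᵥ ((B * (Λᵀ * (H * B))) *ᵥ k) := by
    rw [Matrix.trace_mul_comm]
    have e : Matrix.vecMulVec k k * (B * (Λᵀ * H)) * B
        = Matrix.vecMulVec k k * (B * (Λᵀ * (H * B))) := by
      simp only [Matrix.mul_assoc]
    rw [e, trace_vecMulVec_mul]
  have hrpow : A.det ^ ((1 : ℝ) / d - 1) * A.det = A.det ^ ((1 : ℝ) / d) := by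
    rw [Real.rpow_sub hpos, Real.rpow_one, div_mul_cancel₀ _ hdet0]
  -- expand LHS
  rw [gMat]
  rw [Matrix.transpose_smul, Matrix.smul_mul, Matrix.trace_smul, smul_eq_mul]
  rw [Matrix.transpose_mul, Matrix.transpose_mul, hsymB]
  rw [Matrix.transpose_sub, Matrix.transpose_smul, Matrix.transpose_one, Matrix.transpose_mul,
    hsymB, hkkT]
  rw [Matrix.sub_mul, Matrix.sub_mul, Matrix.smul_mul, Matrix.smul_mul, Matrix.one_mul,
    Matrix.trace_sub, Matrix.trace_smul, smul_eq_mul]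
  -- expand RHS
  rw [hadj, Matrix.smul_mul, Matrix.trace_smul, smul_eq_mul]
  simp only [Matrix.mul_add, Matrix.add_mul, Matrix.neg_mulVec, dotProduct_neg,
    Matrix.add_mulVec, dotProduct_add, Matrix.trace_add]
  simp only [← hA]
  simp only [← hB]
  simp only [Matrix.mul_assoc]
  rw [hτ, hW, hβ]
  set τ : ℝ := (B * (Λᵀ * H)).trace with hτdef
  set β : ℝ := k ⬝ᵥ ((B * (Λᵀ * (H * B))) *ᵥ k) with hβdef
  set q : ℝ := k ⬝ᵥ (B *ᵥ k) with hq
  set D : ℝ := A.det with hD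
  have hd' : True := trivial
  linear_combination (-2 * q * τ / (d : ℝ)) * hrpow

end Stmt13Aux

open Stmt13Aux

theorem stmt13 (p d : ℕ) (hd : 1 ≤ d) (hdp : d ≤ p)
    (k : Fin d → ℝ) (ρ c : ℝ) (hρ : 0 < ρ) (hc : 0 < c)
    (Λ : Matrix (Fin p) (Fin d) ℝ) (hΛ : Λ.rank = d) :
    HasFDerivAt (fun L : Matrix (Fin p) (Fin d) ℝ => phiGauss ρ c k L)
      (gradCLM ((-(2 * π ^ 2 * c ^ (-(2 : ℝ) / d)) * phiGauss ρ c k Λ) •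
        gMat k Λ)) Λ := by
  classical
  set A₀ : Matrix (Fin d) (Fin d) ℝ := Λᵀ * Λ with hA₀
  -- kernel of Λ is trivial
  have hrange : Module.finrank ℝ (LinearMap.range Λ.mulVecLin) = d := hΛ
  have hkerΛ : LinearMap.ker Λ.mulVecLin = ⊥ := by
    have h1 := LinearMap.finrank_range_add_finrank_ker Λ.mulVecLin
    rw [hrange, Module.finrank_fin_fun] at h1
    have h2 : Module.finrank ℝ (LinearMap.ker Λ.mulVecLin) = 0 := by omega
    exact Submodule.finrank_eq_zero.mp h2
  have hker : LinearMap.ker A₀.mulVecLin = ⊥ := by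
    rw [hA₀, Matrix.ker_mulVecLin_transpose_mul_self]; exact hkerΛ
  have hinjΛ : Function.Injective Λ.mulVec := by
    have := LinearMap.ker_eq_bot.mp hkerΛ
    exact this
  have hinj : Function.Injective A₀.mulVec := by
    have := LinearMap.ker_eq_bot.mp hker
    exact this
  have hU : IsUnit A₀ := Matrix.mulVec_injective_iff_isUnit.mp hinj
  have hdet0 : A₀.det ≠ 0 := ((Matrix.isUnit_iff_isUnit_det A₀).mp hU).ne_zero
  -- positive definiteness
  have hPD : A₀.PosDef := by
    refine Matrix.PosDef.of_dotProduct_mulVec_pos ?_ ?_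
    · show A₀ᴴ = A₀
      rw [Matrix.conjTranspose_eq_transpose_of_trivial, hA₀, Matrix.transpose_mul,
        Matrix.transpose_transpose]
    · intro x hx
      have hst : star x = x := rfl
      have h1 : x ⬝ᵥ (A₀ *ᵥ x) = (Λ *ᵥ x) ⬝ᵥ (Λ *ᵥ x) := by
        rw [hA₀, ← Matrix.mulVec_mulVec, Matrix.dotProduct_mulVec, ← Matrix.mulVec_transpose]
        simp [Matrix.dotProduct_mulVec]
      rw [hst, h1]
      have hΛx : Λ *ᵥ x ≠ 0 := by
        intro h
        exact hx (hinjΛ (by simpa using h))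
      have h2 : (Λ *ᵥ x) ⬝ᵥ (Λ *ᵥ x) ≠ 0 := fun h => hΛx (dotProduct_self_eq_zero.mp h)
      have h3 : 0 ≤ (Λ *ᵥ x) ⬝ᵥ (Λ *ᵥ x) := by
        simp only [dotProduct]
        exact Finset.sum_nonneg fun i _ => mul_self_nonneg _
      exact lt_of_le_of_ne h3 (Ne.symm h2)
  have hpos : 0 < A₀.det := hPD.det_pos
  -- symmetry
  have hsym : A₀ᵀ = A₀ := by rw [hA₀, Matrix.transpose_mul, Matrix.transpose_transpose]
  have hsymB : (A₀⁻¹)ᵀ = A₀⁻¹ := by rw [Matrix.transpose_nonsing_inv, hsym]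
  -- constants
  set c₂ : ℝ := 2 * π ^ 2 * c ^ (-(2 : ℝ) / d) with hc₂
  set Cρ : ℝ := ρ * (2 * π) ^ ((d : ℝ) / 2) / c with hCρ
  -- derivative chain
  have hgram := hasFDerivAt_gram Λ
  have hdetA : HasFDerivAt (fun L : Matrix (Fin p) (Fin d) ℝ => (Lᵀ * L).det)
      ((detD A₀).comp (gramD Λ)) Λ := (hasFDerivAt_det A₀).comp Λ hgram
  have hu : HasFDerivAt (fun L : Matrix (Fin p) (Fin d) ℝ => (Lᵀ * L).det ^ ((1 : ℝ) / d))
      (((1 : ℝ) / d * A₀.det ^ ((1 : ℝ) / d - 1)) • ((detD A₀).comp (gramD Λ))) Λ :=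
    (Real.hasDerivAt_rpow_const (x := A₀.det) (p := (1 : ℝ) / d)
      (Or.inl hpos.ne')).comp_hasFDerivAt (f := fun L : Matrix (Fin p) (Fin d) ℝ => (Lᵀ * L).det) Λ hdetA
  have hi : HasFDerivAt (fun L : Matrix (Fin p) (Fin d) ℝ => (Lᵀ * L)⁻¹)
      ((invD A₀).comp (gramD Λ)) Λ := (hasFDerivAt_inv A₀ hdet0).comp Λ hgram
  have hv : HasFDerivAt (fun L : Matrix (Fin p) (Fin d) ℝ => k ⬝ᵥ ((Lᵀ * L)⁻¹ *ᵥ k))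
      ((quadCLM k).comp ((invD A₀).comp (gramD Λ))) Λ :=
    ((quadCLM k).hasFDerivAt).comp Λ hi
  have hm := hu.mul hv
  have hn := (hm.const_mul c₂).neg
  have hexp := (Real.hasDerivAt_exp
    (-(c₂ * (A₀.det ^ ((1 : ℝ) / d) * (k ⬝ᵥ (A₀⁻¹ *ᵥ k)))))).comp_hasFDerivAt Λ hn
  have hfinal := hexp.const_mul Cρ
  -- rewrite the goal function
  have hfun : (fun L : Matrix (Fin p) (Fin d) ℝ => phiGauss ρ c k L)
      = fun L : Matrix (Fin p) (Fin d) ℝ =>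
        Cρ * Real.exp (-(c₂ * ((Lᵀ * L).det ^ ((1 : ℝ) / d) * (k ⬝ᵥ ((Lᵀ * L)⁻¹ *ᵥ k))))) := by
    funext L
    rw [phiGauss, hCρ, hc₂, mul_assoc]
  rw [hfun]
  refine hfinal.congr_fderiv ?_
  refine ContinuousLinearMap.ext fun H => ?_
  simp only [gradCLM_apply, ContinuousLinearMap.smul_apply, ContinuousLinearMap.add_apply,
    ContinuousLinearMap.coe_smul', Pi.smul_apply, ContinuousLinearMap.comp_apply,
    ContinuousLinearMap.neg_apply, quadCLM_apply, invD_apply, detD_apply, gramD_apply,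
    smul_eq_mul]
  show Cρ * (Real.exp (-(c₂ * (A₀.det ^ ((1 : ℝ) / d) * (k ⬝ᵥ (A₀⁻¹ *ᵥ k))))) *
      -(c₂ * ((Λᵀ * Λ).det ^ ((1 : ℝ) / d) *
          (k ⬝ᵥ (-(A₀⁻¹ * (Hᵀ * Λ + Λᵀ * H) * A₀⁻¹) *ᵥ k)) +
        (k ⬝ᵥ ((Λᵀ * Λ)⁻¹ *ᵥ k)) * ((1 / (d : ℝ) * A₀.det ^ ((1 : ℝ) / d - 1)) *
          (A₀.adjugate * (Hᵀ * Λ + Λᵀ * H)).trace)))) =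
    (((-c₂ * phiGauss ρ c k Λ) • gMat k Λ)ᵀ * H).trace
  have hkid := key_identity k Λ H hpos
  simp only [← hA₀] at hkid
  have hphi : phiGauss ρ c k Λ
      = Cρ * Real.exp (-(c₂ * (A₀.det ^ ((1 : ℝ) / d) * (k ⬝ᵥ (A₀⁻¹ *ᵥ k))))) := by
    have := congrFun hfun Λ
    simpa [← hA₀] using this
  rw [Matrix.transpose_smul, Matrix.smul_mul, Matrix.trace_smul, smul_eq_mul, hkid, hphi]
  ring
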